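/- (Reduction of the Lax pair of the third flow.) Let c_0 ∈ ℝ, I ⊆ ℝ an open interval, σ : I → ℝ twice differentiable with σ'(t) > 0 and σ''(t) = -3 c_0 σ'(t)^2 on I, ν : ℤ → ℝ arbitrary, η(n,t) = ν(n) + σ(t), and H, G : ℝ → ℝ. Fix λ ∈ ℝ and set ζ(t) = λ / σ'(t)^{1/3}, u(n,t) = σ'(t)^{1/3} H(η(n,t)), v(n,t) = σ'(t)^{1/3} G(η(n,t)). Let φ : ℝ × ℝ → ℝ be differentiable in both arguments and suppose that for all n ∈ ℤ and t ∈ I, writing η = η(n,t), η̄ = η(n+1,t), η̲ = η(n-1,t), z = ζ(t): z φ(η,z) = H(η) φ(η̄,z) + H(η̲) φ(η̲,z) + G(η) φ(η,z), and c_0 z ∂_ζ φ(η,z) + ∂_η φ(η,z) = 2 H(η)(z^2 + z G(η) + H(η)^2 + H(η̲)^2 + G(η)^2) φ(η̄,z) - (z^3 + 2 z H(η)^2 + H(η)^2 G(η̄) - H(η̲)^2 (2 G(η) + G(η̲)) - G(η)^3) φ(η,z). Then ψ(n,t) := φ(η(n,t), ζ(t)) satisfies the Lax pair of the third flow: λ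 ψ(n,t) = u(n,t) ψ(n+1,t) + u(n-1,t) ψ(n-1,t) + v(n,t) ψ(n,t), and ∂_t ψ(n,t) = 2 u(n,t)(λ^2 + λ v(n,t) + u(n,t)^2 + u(n-1,t)^2 + v(n,t)^2) ψ(n+1,t) - (λ^3 + 2 λ u(n,t)^2 + u(n,t)^2 v(n+1,t) - u(n-1,t)^2 (2 v(n,t) + v(n-1,t)) - v(n,t)^3) ψ(n,t), for all n ∈ ℤ, t ∈ I. -/

import Mathlib

/-- Reduction of the Lax pair of the third flow: if `φ(η, ζ)` solves the
reduced third-flow Lax pair along the reduction `η(n,t) = ν(n) + σ(t)`,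
`ζ(t) = λ/σ'(t)^(1/3)`, then `ψ(n,t) = φ(η(n,t), ζ(t))` solves the Lax pair of the
third flow of the Toda hierarchy with `u = σ'^(1/3) H(η)`, `v = σ'^(1/3) G(η)`. -/
theorem lax_reduction_third_flow
    (c₀ a b lam : ℝ) (σ σ' σ'' : ℝ → ℝ)
    (hσ : ∀ t ∈ Set.Ioo a b, HasDerivAt σ (σ' t) t)
    (hσ' : ∀ t ∈ Set.Ioo a b, HasDerivAt σ' (σ'' t) t)
    (hσpos : ∀ t ∈ Set.Ioo a b, 0 < σ' t)
    (hode : ∀ t ∈ Set.Ioo a b, σ'' t = -3 * c₀ * (σ' t)^2)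
    (ν : ℤ → ℝ) (η : ℤ → ℝ → ℝ) (hη : ∀ (n : ℤ) (t : ℝ), η n t = ν n + σ t)
    (H G : ℝ → ℝ)
    (ζ : ℝ → ℝ) (hζ : ∀ t : ℝ, ζ t = lam / (σ' t) ^ ((1 : ℝ)/3))
    (u v : ℤ → ℝ → ℝ)
    (hu : ∀ (n : ℤ) (t : ℝ), u n t = (σ' t) ^ ((1 : ℝ)/3) * H (η n t))
    (hv : ∀ (n : ℤ) (t : ℝ), v n t = (σ' t) ^ ((1 : ℝ)/3) * G (η n t))
    (φ φη φζ : ℝ × ℝ → ℝ)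
    (hφ : ∀ p : ℝ × ℝ, HasFDerivAt φ
      (φη p • ContinuousLinearMap.fst ℝ ℝ ℝ + φζ p • ContinuousLinearMap.snd ℝ ℝ ℝ) p)
    (hlax₁ : ∀ (n : ℤ), ∀ t ∈ Set.Ioo a b,
      ζ t * φ (η n t, ζ t) =
        H (η n t) * φ (η (n+1) t, ζ t) + H (η (n-1) t) * φ (η (n-1) t, ζ t)
          + G (η n t) * φ (η n t, ζ t))
    (hlax₂ : ∀ (n : ℤ), ∀ t ∈ Set.Ioo a b,
      c₀ * ζ t * φζ (η n t, ζ t) + φη (η n t, ζ t) =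
        2 * H (η n t) * ((ζ t)^2 + ζ t * G (η n t) + (H (η n t))^2
              + (H (η (n-1) t))^2 + (G (η n t))^2) * φ (η (n+1) t, ζ t)
          - ((ζ t)^3 + 2 * ζ t * (H (η n t))^2 + (H (η n t))^2 * G (η (n+1) t)
              - (H (η (n-1) t))^2 * (2 * G (η n t) + G (η (n-1) t))
              - (G (η n t))^3) * φ (η n t, ζ t))
    (ψ : ℤ → ℝ → ℝ) (hψ : ∀ (n : ℤ) (t : ℝ), ψ n t = φ (η n t, ζ t)) :
    ∀ (n : ℤ), ∀ t ∈ Set.Ioo a b,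
      lam * ψ n t = u n t * ψ (n+1) t + u (n-1) t * ψ (n-1) t + v n t * ψ n t ∧
      HasDerivAt (fun s => ψ n s)
        (2 * u n t * (lam^2 + lam * v n t + (u n t)^2 + (u (n-1) t)^2 + (v n t)^2)
            * ψ (n+1) t
          - (lam^3 + 2 * lam * (u n t)^2 + (u n t)^2 * v (n+1) t
              - (u (n-1) t)^2 * (2 * v n t + v (n-1) t) - (v n t)^3) * ψ n t) t := by
  intro n t ht
  have hpos := hσpos t ht
  set S : ℝ := (σ' t) ^ ((1 : ℝ)/3) with hS
  have hSpos : 0 < S := Real.rpow_pos_of_pos hpos _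
  have hS3 : S ^ 3 = σ' t := by
    rw [hS, ← Real.rpow_natCast ((σ' t) ^ ((1:ℝ)/3)) 3, ← Real.rpow_mul hpos.le]
    norm_num
  have hlam : lam = ζ t * S := by
    rw [hζ]; field_simp; rfl
  have e1 := hlax₁ n t ht
  have e2 := hlax₂ n t ht
  constructor
  · rw [hψ, hψ, hψ, hu, hu, hv, hlam, ← hS]
    linear_combination S * e1
  · -- derivative of η n
    have hη' : HasDerivAt (fun s' => η n s') (σ' t) t := by
      have hfe : (fun s' => η n s') = fun s' => ν n + σ s' := funext (hη n)
      rw [hfe]; exact (hσ t ht).const_add _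
    -- derivative of ζ
    have hf : HasDerivAt (fun s' => (σ' s') ^ ((1:ℝ)/3))
        (σ'' t * ((1:ℝ)/3) * (σ' t) ^ ((1:ℝ)/3 - 1)) t :=
      (hσ' t ht).rpow_const (Or.inl hpos.ne')
    have hζ' : HasDerivAt ζ (c₀ * ζ t * σ' t) t := by
      have hfe : ζ = fun s' => lam / (σ' s') ^ ((1:ℝ)/3) := funext hζ
      have hd := (hasDerivAt_const t lam).div hf hSpos.ne'
      have hsub : (σ' t) ^ ((1:ℝ)/3 - 1) = S / σ' t := by
        rw [Real.rpow_sub hpos, Real.rpow_one, hS]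
      have hval : c₀ * ζ t * σ' t
          = (0 * S - lam * (σ'' t * ((1:ℝ)/3) * (σ' t) ^ ((1:ℝ)/3 - 1))) / S ^ 2 := by
        rw [hsub, hode t ht, hζ t, ← hS, ← hS3]
        field_simp
        ring
      rw [hval, hfe]
      exact hd
    -- derivative of ψ n
    have hγ : HasDerivAt (fun s' => (η n s', ζ s')) ((σ' t, c₀ * ζ t * σ' t)) t :=
      hη'.prodMk hζ'
    have hcomp : HasDerivAt (φ ∘ fun s' => (η n s', ζ s')) _ t := (hφ (η n t, ζ t)).comp_hasDerivAt t hγ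
    have hfe : (fun s => ψ n s) = fun s' => φ (η n s', ζ s') := funext fun s' => hψ n s'
    rw [hfe]
    convert hcomp using 1
    · rfl
    simp only [ContinuousLinearMap.add_apply, ContinuousLinearMap.coe_smul',
      Pi.smul_apply, ContinuousLinearMap.coe_fst', ContinuousLinearMap.coe_snd',
      smul_eq_mul]
    rw [hψ, hψ, hu, hu, hv, hv, hv, hlam, ← hS, ← hS3]
    linear_combination (-(S^3)) * e2
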